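/- Let v : ℕ₀ → ℝ with v(0) > 0 satisfy the recursion v(r+1) − v(r) = (−λ/∂B(r)) ∑_{k=0}^r v(k) m(S_k) for all r ≥ 0, where λ < 0, ∂B(r) > 0, m(S_k) > 0 and V(r) = ∑_{k=0}^r m(S_k). Then v is strictly increasing and satisfies the two-sided bound (−λ ∑_{k=0}^r V(k)/∂B(k)) v(0) ≤ v(r+1) ≤ ∏_{k=0}^r (1 − λ V(k)/∂B(k)) v(0). Consequently, v is bounded if and only if ∑_{k=0}^∞ V(k)/∂B(k) < ∞. -/

import Mathlib

/-- The key computation for weakly spherically symmetric graphs: a positive solution of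
the spherical recursion is strictly increasing, satisfies a two-sided bound, and is
bounded iff `∑ V(k)/∂B(k) < ∞`. -/
theorem recursion_two_sided_bound (lam : ℝ) (hlam : lam < 0)
    (dB mS : ℕ → ℝ) (hdB : ∀ r, 0 < dB r) (hmS : ∀ r, 0 < mS r)
    (V : ℕ → ℝ) (hV : ∀ r, V r = ∑ k ∈ Finset.range (r + 1), mS k)
    (v : ℕ → ℝ) (hv0 : 0 < v 0)
    (hrec : ∀ r, v (r + 1) - v r = (-lam / dB r) * ∑ k ∈ Finset.range (r + 1), v k * mS k) :
    StrictMono v ∧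
    (∀ r, (-lam * ∑ k ∈ Finset.range (r + 1), V k / dB k) * v 0 ≤ v (r + 1) ∧
      v (r + 1) ≤ (∏ k ∈ Finset.range (r + 1), (1 - lam * V k / dB k)) * v 0) ∧
    ((∃ C : ℝ, ∀ r, |v r| ≤ C) ↔ Summable fun k => V k / dB k) := by
  have hlam' : 0 < -lam := by linarith
  have hVpos : ∀ r, 0 < V r := fun r => by
    rw [hV]; exact Finset.sum_pos (fun i _ => hmS i) (by simp)
  have hfpos : ∀ r, 0 < V r / dB r := fun r => div_pos (hVpos r) (hdB r)
  -- positivity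
  have hvpos : ∀ r, 0 < v r := by
    intro r
    induction r using Nat.strong_induction_on with
    | _ r ih =>
      match r with
      | 0 => exact hv0
      | (n+1) =>
        have hsum : 0 < ∑ k ∈ Finset.range (n+1), v k * mS k :=
          Finset.sum_pos (fun i hi => mul_pos (ih i (Finset.mem_range.mp hi)) (hmS i))
            (by simp)
        have h := hrec n
        have hvn : 0 < v n := ih n (Nat.lt_succ_self n)
        nlinarith [div_pos hlam' (hdB n)]
  -- strictly increasing
  have hstep : ∀ r, v r < v (r+1) := by
    intro r
    have hsum : 0 < ∑ k ∈ Finset.range (r+1), v k * mS k :=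
      Finset.sum_pos (fun i _ => mul_pos (hvpos i) (hmS i)) (by simp)
    have h := hrec r
    nlinarith [div_pos hlam' (hdB r)]
  have hmono : StrictMono v := strictMono_nat_of_lt_succ hstep
  -- step inequalities
  have hstep2 : ∀ r, v r + (-lam / dB r) * (v 0 * V r) ≤ v (r+1) := by
    intro r
    have hsum : v 0 * V r ≤ ∑ k ∈ Finset.range (r+1), v k * mS k := by
      rw [hV, Finset.mul_sum]
      exact Finset.sum_le_sum fun i _ =>
        mul_le_mul_of_nonneg_right (hmono.monotone (Nat.zero_le i)) (hmS i).le
    have := mul_le_mul_of_nonneg_left hsum (le_of_lt (div_pos hlam' (hdB r)))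
    have h := hrec r
    linarith
  have hstep3 : ∀ r, v (r+1) ≤ (1 - lam * V r / dB r) * v r := by
    intro r
    have hsum : ∑ k ∈ Finset.range (r+1), v k * mS k ≤ v r * V r := by
      rw [hV, Finset.mul_sum]
      refine Finset.sum_le_sum fun i hi => ?_
      exact mul_le_mul_of_nonneg_right
        (hmono.monotone (Nat.lt_succ_iff.mp (Finset.mem_range.mp hi))) (hmS i).le
    have := mul_le_mul_of_nonneg_left hsum (le_of_lt (div_pos hlam' (hdB r)))
    have h := hrec r
    have heq : (-lam / dB r) * (v r * V r) = (1 - lam * V r / dB r) * v r - v r := by ring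
    linarith
  -- lower bound (strengthened)
  have hlow : ∀ r, v 0 + (-lam * ∑ k ∈ Finset.range (r + 1), V k / dB k) * v 0 ≤ v (r+1) := by
    intro r
    induction r with
    | zero =>
      have := hstep2 0
      have hx : (-lam * ∑ k ∈ Finset.range 1, V k / dB k) * v 0
          = (-lam / dB 0) * (v 0 * V 0) := by
        rw [Finset.sum_range_one]; ring
      linarith
    | succ n ih =>
      have h2 := hstep2 (n+1)
      have hx : (-lam * ∑ k ∈ Finset.range (n + 2), V k / dB k) * v 0
          = (-lam * ∑ k ∈ Finset.range (n + 1), V k / dB k) * v 0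
            + (-lam / dB (n+1)) * (v 0 * V (n+1)) := by
        rw [Finset.sum_range_succ]; ring
      linarith
  -- upper bound
  have hup : ∀ r, v (r+1) ≤ (∏ k ∈ Finset.range (r + 1), (1 - lam * V k / dB k)) * v 0 := by
    intro r
    induction r with
    | zero =>
      rw [Finset.prod_range_one]; exact hstep3 0
    | succ n ih =>
      have h3 := hstep3 (n+1)
      have hfac : 0 ≤ 1 - lam * V (n+1) / dB (n+1) := by
        have : lam * V (n+1) / dB (n+1) < 0 :=
          div_neg_of_neg_of_pos (mul_neg_of_neg_of_pos hlam (hVpos (n+1))) (hdB (n+1))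
        linarith
      calc v (n+2) ≤ (1 - lam * V (n+1) / dB (n+1)) * v (n+1) := h3
        _ ≤ (1 - lam * V (n+1) / dB (n+1)) *
            ((∏ k ∈ Finset.range (n + 1), (1 - lam * V k / dB k)) * v 0) :=
          mul_le_mul_of_nonneg_left ih hfac
        _ = (∏ k ∈ Finset.range (n + 1 + 1), (1 - lam * V k / dB k)) * v 0 := by
          conv_rhs => rw [Finset.prod_range_succ]
          ring
  refine ⟨hmono, fun r => ⟨?_, hup r⟩, ?_⟩
  · have := hlow r
    linarith
  constructor
  · rintro ⟨C, hC⟩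
    refine summable_of_sum_range_le (c := C / (-lam * v 0)) (fun i => (hfpos i).le) ?_
    intro n
    have hden : 0 < -lam * v 0 := mul_pos hlam' hv0
    match n with
    | 0 =>
      simp only [Finset.range_zero, Finset.sum_empty]
      have : 0 < C := lt_of_lt_of_le hv0 ((le_abs_self (v 0)).trans (hC 0))
      positivity
    | (m+1) =>
      rw [le_div_iff₀ hden]
      have h1 := (hlow m)
      have h2 := (le_abs_self (v (m+1))).trans (hC (m+1))
      nlinarith
  · intro hS
    set f : ℕ → ℝ := fun k => V k / dB k with hf
    have hT0 : 0 ≤ ∑' k, f k := tsum_nonneg fun k => (hfpos k).le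
    refine ⟨Real.exp (-lam * ∑' k, f k) * v 0, fun r => ?_⟩
    rw [abs_of_pos (hvpos r)]
    have hexp1 : (1:ℝ) ≤ Real.exp (-lam * ∑' k, f k) := by
      rw [Real.one_le_exp_iff]
      positivity
    match r with
    | 0 => nlinarith
    | (m+1) =>
      have hprod : (∏ k ∈ Finset.range (m + 1), (1 - lam * V k / dB k))
          ≤ Real.exp (-lam * ∑ k ∈ Finset.range (m+1), f k) := by
        rw [Finset.mul_sum, Real.exp_sum]
        refine Finset.prod_le_prod (fun i _ => ?_) (fun i _ => ?_)
        · have : lam * V i / dB i < 0 :=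
            div_neg_of_neg_of_pos (mul_neg_of_neg_of_pos hlam (hVpos i)) (hdB i)
          linarith
        · have := Real.add_one_le_exp (-lam * f i)
          have hx : 1 - lam * V i / dB i = -lam * f i + 1 := by
            simp only [hf]; ring
          linarith
      have hsum_le : ∑ k ∈ Finset.range (m+1), f k ≤ ∑' k, f k :=
        Summable.sum_le_tsum _ (fun i _ => (hfpos i).le) hS
      have hexp2 : Real.exp (-lam * ∑ k ∈ Finset.range (m+1), f k)
          ≤ Real.exp (-lam * ∑' k, f k) :=
        Real.exp_le_exp.mpr (mul_le_mul_of_nonneg_left hsum_le hlam'.le)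
      calc v (m+1) ≤ (∏ k ∈ Finset.range (m + 1), (1 - lam * V k / dB k)) * v 0 := hup m
        _ ≤ Real.exp (-lam * ∑' k, f k) * v 0 := by
          apply mul_le_mul_of_nonneg_right _ hv0.le
          exact hprod.trans hexp2
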